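/- Let V be a finite nonempty index set, L a finite nonempty label type, 𝓡 a region family with potentials θ_r : Y_r → ℝ, ε > 0, and coefficients c_r > 0 (r ∈ 𝓡) that fractionally cover V. Let a_r : Y_r → ℝ be adjustment functions with ∑_{r∈𝓡} a_r(y|_r) = 0 for every joint label y. Then ε·log( ∑_{y : V → L} exp( (∑_{r∈𝓡} θ_r(y|_r)) / ε ) ) ≤ ∑_{r∈𝓡} ε·c_r·log( ∑_{z ∈ Y_r} exp( (θ_r(z) + a_r(z)) / (ε·c_r) ) ). -/

import Mathlib

open Finset

/-- Generalized Hölder for a single sum with exponents summing to at least 1. -/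
private lemma lemA {X ι : Type*} [Fintype X] (t : Finset ι) (g : ι → X → ℝ) (c : ι → ℝ)
    (hg : ∀ r ∈ t, ∀ x, 0 ≤ g r x) (hc : ∀ r ∈ t, 0 ≤ c r)
    (hs : 1 ≤ ∑ r ∈ t, c r) :
    ∑ x : X, ∏ r ∈ t, g r x ^ c r ≤ ∏ r ∈ t, (∑ x : X, g r x) ^ c r := by
  classical
  set t' := t.filter (fun r => c r ≠ 0) with ht'
  have hLx : ∀ x : X, ∏ r ∈ t, g r x ^ c r = ∏ r ∈ t', g r x ^ c r := by
    intro x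
    exact (Finset.prod_filter_of_ne (fun r _ hne => by
      intro h0; apply hne; rw [h0, Real.rpow_zero])).symm
  have hR : ∏ r ∈ t, (∑ x : X, g r x) ^ c r = ∏ r ∈ t', (∑ x : X, g r x) ^ c r := by
    exact (Finset.prod_filter_of_ne (fun r _ hne => by
      intro h0; apply hne; rw [h0, Real.rpow_zero])).symm
  have hsum : ∑ r ∈ t', c r = ∑ r ∈ t, c r := Finset.sum_filter_ne_zero t
  simp only [hLx, hR]
  have hsub : t' ⊆ t := Finset.filter_subset _ _
  have hc' : ∀ r ∈ t', 0 < c r := by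
    intro r hr
    rcases Finset.mem_filter.mp hr with ⟨hrt, hne⟩
    exact lt_of_le_of_ne (hc r hrt) (Ne.symm hne)
  by_cases hz : ∃ r ∈ t', ∑ x : X, g r x = 0
  · rcases hz with ⟨r₀, hr₀, h0⟩
    have hr₀t := hsub hr₀
    have hg0 : ∀ x : X, g r₀ x = 0 := by
      intro x
      have := (Finset.sum_eq_zero_iff_of_nonneg (fun x _ => hg r₀ hr₀t x)).mp h0
      exact this x (Finset.mem_univ x)
    have hLHS : ∑ x : X, ∏ r ∈ t', g r x ^ c r = 0 := by
      apply Finset.sum_eq_zero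
      intro x _
      apply Finset.prod_eq_zero hr₀
      rw [hg0 x, Real.zero_rpow (ne_of_gt (hc' r₀ hr₀))]
    have hRHS : ∏ r ∈ t', (∑ x : X, g r x) ^ c r = 0 := by
      apply Finset.prod_eq_zero hr₀
      rw [h0, Real.zero_rpow (ne_of_gt (hc' r₀ hr₀))]
    rw [hLHS, hRHS]
  · push_neg at hz
    set S : ι → ℝ := fun r => ∑ x : X, g r x with hS
    have hSpos : ∀ r ∈ t', 0 < S r := by
      intro r hr
      exact lt_of_le_of_ne (Finset.sum_nonneg (fun x _ => hg r (hsub hr) x)) (Ne.symm (hz r hr))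
    set s := ∑ r ∈ t', c r with hsdef
    have hs1 : 1 ≤ s := by rw [hsum]; exact hs
    have hspos : 0 < s := lt_of_lt_of_le one_pos hs1
    have key : ∀ x : X, ∏ r ∈ t', g r x ^ c r ≤
        (∏ r ∈ t', S r ^ c r) * ∑ r ∈ t', (c r / s) * (g r x / S r) := by
      intro x
      have h1 : ∀ r ∈ t', g r x ^ c r = S r ^ c r * (g r x / S r) ^ c r := by
        intro r hr
        rw [← Real.mul_rpow (le_of_lt (hSpos r hr))
          (div_nonneg (hg r (hsub hr) x) (le_of_lt (hSpos r hr)))]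
        rw [mul_div_cancel₀ _ (ne_of_gt (hSpos r hr))]
      rw [Finset.prod_congr rfl h1, Finset.prod_mul_distrib]
      apply mul_le_mul_of_nonneg_left _ (Finset.prod_nonneg
        (fun r hr => Real.rpow_nonneg (le_of_lt (hSpos r hr)) _))
      have h2 : ∀ r ∈ t', (g r x / S r) ^ c r ≤ (g r x / S r) ^ (c r / s) := by
        intro r hr
        have hb0 : 0 ≤ g r x / S r := div_nonneg (hg r (hsub hr) x) (le_of_lt (hSpos r hr))
        have hb1 : g r x / S r ≤ 1 := by
          rw [div_le_one (hSpos r hr)]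
          exact Finset.single_le_sum (fun x _ => hg r (hsub hr) x) (Finset.mem_univ x)
        have hexp : c r / s ≤ c r := by
          rw [div_le_iff₀ hspos]
          nlinarith [hc' r hr]
        exact Real.rpow_le_rpow_of_exponent_ge' hb0 hb1
          (le_of_lt (div_pos (hc' r hr) hspos)) hexp
      calc ∏ r ∈ t', (g r x / S r) ^ c r ≤ ∏ r ∈ t', (g r x / S r) ^ (c r / s) :=
            Finset.prod_le_prod (fun r hr => Real.rpow_nonneg
              (div_nonneg (hg r (hsub hr) x) (le_of_lt (hSpos r hr))) _) h2
        _ ≤ ∑ r ∈ t', (c r / s) * (g r x / S r) :=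
            Real.geom_mean_le_arith_mean_weighted t' _ _
              (fun r hr => le_of_lt (div_pos (hc' r hr) hspos))
              (by rw [← Finset.sum_div, ← hsdef, div_self (ne_of_gt hspos)])
              (fun r hr => div_nonneg (hg r (hsub hr) x) (le_of_lt (hSpos r hr)))
    calc ∑ x : X, ∏ r ∈ t', g r x ^ c r
        ≤ ∑ x : X, (∏ r ∈ t', S r ^ c r) * ∑ r ∈ t', (c r / s) * (g r x / S r) :=
          Finset.sum_le_sum (fun x _ => key x)
      _ = (∏ r ∈ t', S r ^ c r) * ∑ x : X, ∑ r ∈ t', (c r / s) * (g r x / S r) := by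
          rw [← Finset.mul_sum]
      _ = ∏ r ∈ t', S r ^ c r := by
          rw [Finset.sum_comm]
          have : ∀ r ∈ t', ∑ x : X, (c r / s) * (g r x / S r) = c r / s := by
            intro r hr
            rw [← Finset.mul_sum, ← Finset.sum_div]
            simp only [hS]
            rw [div_self (hz r hr), mul_one]
          rw [Finset.sum_congr rfl this, ← Finset.sum_div, ← hsdef,
            div_self (ne_of_gt hspos), mul_one]

/-- Summing over all updates at a coordinate counts every function `card L` times. -/
private lemma sum_update {V L : Type*} [Fintype V] [DecidableEq V] [Fintype L]
    (G : (V → L) → ℝ) (i : V) :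
    ∑ y : V → L, ∑ ℓ : L, G (Function.update y i ℓ) = (Fintype.card L : ℝ) * ∑ y : V → L, G y := by
  classical
  set e := Equiv.funSplitAt i L with he
  have hupd : ∀ (p : L × ({ j // j ≠ i } → L)) (ℓ : L),
      Function.update (e.symm p) i ℓ = e.symm (ℓ, p.2) := by
    intro p ℓ
    funext j
    by_cases h : j = i
    · subst h; simp [he, Equiv.funSplitAt, Equiv.piSplitAt]
    · simp [he, Function.update_of_ne h, Equiv.funSplitAt, Equiv.piSplitAt, h]
  have h1 : ∑ y : V → L, ∑ ℓ : L, G (Function.update y i ℓ)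
      = ∑ p : L × ({ j // j ≠ i } → L), ∑ ℓ : L, G (Function.update (e.symm p) i ℓ) :=
    (Equiv.sum_comp e.symm (fun y => ∑ ℓ : L, G (Function.update y i ℓ))).symm
  have h2 : ∑ y : V → L, G y = ∑ p : L × ({ j // j ≠ i } → L), G (e.symm p) :=
    (Equiv.sum_comp e.symm G).symm
  rw [h1, h2]
  simp_rw [hupd]
  rw [Fintype.sum_prod_type, Fintype.sum_prod_type]
  have hcomm : (∑ a : L, ∑ w : { j // j ≠ i } → L, G (e.symm (a, w)))
      = ∑ w : { j // j ≠ i } → L, ∑ ℓ : L, G (e.symm (ℓ, w)) := Finset.sum_comm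
  rw [hcomm]
  dsimp only
  rw [Finset.sum_const, Finset.card_univ, nsmul_eq_mul]

/-- Summing a function of the restriction over all joint labels. -/
private lemma sum_restrict {V L : Type*} [Fintype V] [DecidableEq V] [Fintype L]
    (r : Finset V) (g : (↥r → L) → ℝ) :
    ∑ y : V → L, g (fun i => y ↑i)
      = (Fintype.card L : ℝ) ^ (Fintype.card V - r.card) * ∑ z : ↥r → L, g z := by
  classical
  set e0 := Equiv.sumCompl (fun i : V => i ∈ r) with he0
  set e := (e0.arrowCongr (Equiv.refl L)).symm.trans
    (Equiv.sumArrowEquivProdArrow _ _ L) with he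
  have hfst : ∀ y : V → L, (e y).1 = fun i : ↥r => y ↑i := by
    intro y
    funext i
    rfl
  have h1 : ∑ y : V → L, g (fun i => y ↑i)
      = ∑ p : (↥r → L) × ({ i // ¬ i ∈ r } → L), g (fun i => (e.symm p) ↑i) := by
    rw [← Equiv.sum_comp e.symm (fun y : V → L => g (fun i => y ↑i))]
  have h2 : ∀ p : (↥r → L) × ({ i // ¬ i ∈ r } → L),
      (fun i : ↥r => (e.symm p) ↑i) = p.1 := by
    intro p
    have := hfst (e.symm p)
    rw [Equiv.apply_symm_apply] at this
    exact this.symm ▸ rfl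
  rw [h1]
  simp_rw [h2]
  rw [Fintype.sum_prod_type]
  have h3 : ∀ z : ↥r → L, ∑ _w : { i // ¬ i ∈ r } → L, g z
      = (Fintype.card L : ℝ) ^ (Fintype.card V - r.card) * g z := by
    intro z
    rw [Finset.sum_const, Finset.card_univ, nsmul_eq_mul]
    congr 1
    rw [Fintype.card_fun, Fintype.card_subtype_compl, Fintype.card_coe]
    push_cast
    ring
  rw [Finset.sum_congr rfl (fun z _ => h3 z), ← Finset.mul_sum]

/-- Main fractional-covering bound (Finner-type inequality), induction form. -/
private lemma lemB {V L : Type*} [Fintype V] [DecidableEq V] [Fintype L] [Nonempty L]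
    {ι : Type*} [DecidableEq ι] (s : Finset V) :
    ∀ (t : Finset ι) (d : ι → Finset V) (f : ι → (V → L) → ℝ) (c : ι → ℝ),
    (∀ r ∈ t, d r ⊆ s) → (∀ r ∈ t, ∀ y, 0 ≤ f r y) →
    (∀ r ∈ t, ∀ y y' : V → L, (∀ i ∈ d r, y i = y' i) → f r y = f r y') →
    (∀ r ∈ t, 0 ≤ c r) → (∀ i ∈ s, 1 ≤ ∑ r ∈ t.filter (fun r => i ∈ d r), c r) →
    ∑ y : V → L, ∏ r ∈ t, f r y ^ c r ≤
      (Fintype.card L : ℝ) ^ (Fintype.card V - s.card) *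
        ∏ r ∈ t, ((Fintype.card L : ℝ) ^ ((d r).card) / (Fintype.card L : ℝ) ^ (Fintype.card V) *
          ∑ y : V → L, f r y) ^ c r := by
  classical
  have hN1 : (1 : ℝ) ≤ (Fintype.card L : ℝ) := by
    exact_mod_cast Fintype.card_pos
  have hN0 : (0 : ℝ) < (Fintype.card L : ℝ) := lt_of_lt_of_le one_pos hN1
  induction s using Finset.induction with
  | empty =>
    intro t d f c hd hf hdep hc _
    have y₀ : V → L := fun _ => Classical.arbitrary L
    have hconst : ∀ r ∈ t, ∀ y : V → L, f r y = f r y₀ := by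
      intro r hr y
      apply hdep r hr
      intro i hi
      exact absurd (hd r hr hi) (Finset.notMem_empty i)
    have hcardfun : (Fintype.card (V → L) : ℝ)
        = (Fintype.card L : ℝ) ^ (Fintype.card V) := by
      rw [Fintype.card_fun]; push_cast; ring
    have hL : ∑ y : V → L, ∏ r ∈ t, f r y ^ c r
        = (Fintype.card L : ℝ) ^ (Fintype.card V) * ∏ r ∈ t, f r y₀ ^ c r := by
      rw [Finset.sum_congr rfl (fun y _ => Finset.prod_congr rfl
        (fun r hr => by rw [hconst r hr y]))]
      rw [Finset.sum_const, Finset.card_univ, nsmul_eq_mul, hcardfun]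
    rw [hL]
    apply le_of_eq
    rw [Finset.card_empty, Nat.sub_zero]
    congr 1
    apply Finset.prod_congr rfl
    intro r hr
    congr 1
    have hdr : d r = ∅ := Finset.subset_empty.mp (hd r hr)
    have hsumf : ∑ y : V → L, f r y = (Fintype.card L : ℝ) ^ (Fintype.card V) * f r y₀ := by
      rw [Finset.sum_congr rfl (fun y _ => hconst r hr y), Finset.sum_const,
        Finset.card_univ, nsmul_eq_mul, hcardfun]
    rw [hdr, hsumf, Finset.card_empty, pow_zero]
    field_simp
  | @insert i s' hi IH =>
    intro t d f c hd hf hdep hc hcov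
    set g : ι → (V → L) → ℝ := fun r y =>
      if i ∈ d r then ∑ ℓ : L, f r (Function.update y i ℓ) else f r y with hg
    set d' : ι → Finset V := fun r => (d r).erase i with hd'def
    have hgnn : ∀ r ∈ t, ∀ y : V → L, 0 ≤ g r y := by
      intro r hr y
      simp only [hg]
      split
      · exact Finset.sum_nonneg (fun ℓ _ => hf r hr _)
      · exact hf r hr y
    have hfupd : ∀ r ∈ t, i ∉ d r → ∀ (y : V → L) (ℓ : L),
        f r (Function.update y i ℓ) = f r y := by
      intro r hr hir y ℓ
      apply hdep r hr
      intro j hj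
      have hji : j ≠ i := fun h => hir (h ▸ hj)
      rw [Function.update_of_ne hji]
    have key : ∀ y : V → L,
        ∑ ℓ : L, ∏ r ∈ t, f r (Function.update y i ℓ) ^ c r ≤ ∏ r ∈ t, g r y ^ c r := by
      intro y
      have hsplit : ∀ ℓ : L, ∏ r ∈ t, f r (Function.update y i ℓ) ^ c r
          = (∏ r ∈ t.filter (fun r => i ∈ d r), f r (Function.update y i ℓ) ^ c r) *
            ∏ r ∈ t.filter (fun r => ¬ i ∈ d r), f r y ^ c r := by
        intro ℓ
        rw [← Finset.prod_filter_mul_prod_filter_not t (fun r => i ∈ d r)]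
        congr 1
        apply Finset.prod_congr rfl
        intro r hr
        rcases Finset.mem_filter.mp hr with ⟨hrt, hir⟩
        rw [hfupd r hrt hir y ℓ]
      simp_rw [hsplit]
      rw [← Finset.sum_mul,
        ← Finset.prod_filter_mul_prod_filter_not t (fun r => i ∈ d r)]
      have h2 : ∏ r ∈ t.filter (fun r => ¬ i ∈ d r), f r y ^ c r
          = ∏ r ∈ t.filter (fun r => ¬ i ∈ d r), g r y ^ c r := by
        apply Finset.prod_congr rfl
        intro r hr
        rcases Finset.mem_filter.mp hr with ⟨hrt, hir⟩
        simp only [hg, if_neg hir]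
      have h1 : ∑ ℓ : L, ∏ r ∈ t.filter (fun r => i ∈ d r),
            f r (Function.update y i ℓ) ^ c r
          ≤ ∏ r ∈ t.filter (fun r => i ∈ d r), g r y ^ c r := by
        have hA := lemA (t.filter (fun r => i ∈ d r))
          (fun r ℓ => f r (Function.update y i ℓ)) c
          (fun r hr ℓ => hf r (Finset.mem_of_mem_filter r hr) _)
          (fun r hr => hc r (Finset.mem_of_mem_filter r hr))
          (hcov i (Finset.mem_insert_self i s'))
        refine hA.trans (le_of_eq ?_)
        apply Finset.prod_congr rfl
        intro r hr
        rcases Finset.mem_filter.mp hr with ⟨hrt, hir⟩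
        simp only [hg, if_pos hir]
      rw [h2]
      exact mul_le_mul_of_nonneg_right h1 (Finset.prod_nonneg (fun r hr =>
        Real.rpow_nonneg (hgnn r (Finset.mem_of_mem_filter r hr) y) _))
    have hG := sum_update (fun y : V → L => ∏ r ∈ t, f r y ^ c r) i
    have step3 : (Fintype.card L : ℝ) * ∑ y : V → L, ∏ r ∈ t, f r y ^ c r
        ≤ ∑ y : V → L, ∏ r ∈ t, g r y ^ c r := by
      rw [← hG]
      refine Finset.sum_le_sum (fun y _ => ?_)
      have := key y
      simpa using this
    -- IH hypotheses
    have hd' : ∀ r ∈ t, d' r ⊆ s' := by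
      intro r hr j hj
      rcases Finset.mem_erase.mp hj with ⟨hne, hjd⟩
      rcases Finset.mem_insert.mp (hd r hr hjd) with h | h
      · exact absurd h hne
      · exact h
    have hdep' : ∀ r ∈ t, ∀ y y' : V → L, (∀ j ∈ d' r, y j = y' j) → g r y = g r y' := by
      intro r hr y y' hag
      by_cases hir : i ∈ d r
      · simp only [hg, if_pos hir]
        apply Finset.sum_congr rfl
        intro ℓ _
        apply hdep r hr
        intro j hj
        by_cases hji : j = i
        · subst hji; rw [Function.update_self, Function.update_self]
        · rw [Function.update_of_ne hji, Function.update_of_ne hji]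
          exact hag j (Finset.mem_erase.mpr ⟨hji, hj⟩)
      · simp only [hg, if_neg hir]
        apply hdep r hr
        intro j hj
        have hji : j ≠ i := fun h => hir (h ▸ hj)
        exact hag j (Finset.mem_erase.mpr ⟨hji, hj⟩)
    have hcov' : ∀ j ∈ s', 1 ≤ ∑ r ∈ t.filter (fun r => j ∈ d' r), c r := by
      intro j hj
      have hji : j ≠ i := fun h => hi (h ▸ hj)
      have heq : t.filter (fun r => j ∈ d' r) = t.filter (fun r => j ∈ d r) := by
        apply Finset.filter_congr
        intro r _
        simp [hd'def, Finset.mem_erase, hji]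
      rw [heq]
      exact hcov j (Finset.mem_insert_of_mem hj)
    have hIH := IH t d' g c hd' hgnn hdep' hc hcov'
    -- per-factor rewriting
    have hfac : ∀ r ∈ t, ((Fintype.card L : ℝ) ^ ((d' r).card) /
          (Fintype.card L : ℝ) ^ (Fintype.card V) * ∑ y : V → L, g r y)
        = (Fintype.card L : ℝ) ^ ((d r).card) /
          (Fintype.card L : ℝ) ^ (Fintype.card V) * ∑ y : V → L, f r y := by
      intro r hr
      by_cases hir : i ∈ d r
      · have hcard : (d r).card = (d' r).card + 1 := by
          simp only [hd'def]
          exact (Finset.card_erase_add_one hir).symm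
        have hsum : ∑ y : V → L, g r y
            = (Fintype.card L : ℝ) * ∑ y : V → L, f r y := by
          simp only [hg, if_pos hir]
          exact sum_update (f r) i
        rw [hsum, hcard, pow_succ]
        ring
      · have hdd : d' r = d r := by
          simp only [hd'def]
          exact Finset.erase_eq_of_notMem hir
        have hsum : ∑ y : V → L, g r y = ∑ y : V → L, f r y := by
          apply Finset.sum_congr rfl
          intro y _
          simp only [hg, if_neg hir]
        rw [hdd, hsum]
    have hcard_le : s'.card + 1 ≤ Fintype.card V := by
      have h := Finset.card_le_univ (insert i s')
      rwa [Finset.card_insert_of_notMem hi] at h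
    have hpref : ((Fintype.card L : ℝ))⁻¹ * (Fintype.card L : ℝ) ^ (Fintype.card V - s'.card)
        = (Fintype.card L : ℝ) ^ (Fintype.card V - (insert i s').card) := by
      rw [Finset.card_insert_of_notMem hi]
      have h : Fintype.card V - s'.card = (Fintype.card V - (s'.card + 1)) + 1 := by omega
      rw [h, pow_succ]
      field_simp
    have hinv : (0:ℝ) ≤ ((Fintype.card L : ℝ))⁻¹ := inv_nonneg.mpr (le_of_lt hN0)
    calc ∑ y : V → L, ∏ r ∈ t, f r y ^ c r
        = ((Fintype.card L : ℝ))⁻¹ *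
          ((Fintype.card L : ℝ) * ∑ y : V → L, ∏ r ∈ t, f r y ^ c r) := by
          rw [← mul_assoc, inv_mul_cancel₀ (ne_of_gt hN0), one_mul]
      _ ≤ ((Fintype.card L : ℝ))⁻¹ * ∑ y : V → L, ∏ r ∈ t, g r y ^ c r :=
          mul_le_mul_of_nonneg_left step3 hinv
      _ ≤ ((Fintype.card L : ℝ))⁻¹ * ((Fintype.card L : ℝ) ^ (Fintype.card V - s'.card) *
            ∏ r ∈ t, ((Fintype.card L : ℝ) ^ ((d' r).card) /
              (Fintype.card L : ℝ) ^ (Fintype.card V) * ∑ y : V → L, g r y) ^ c r) :=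
          mul_le_mul_of_nonneg_left hIH hinv
      _ = (Fintype.card L : ℝ) ^ (Fintype.card V - (insert i s').card) *
            ∏ r ∈ t, ((Fintype.card L : ℝ) ^ ((d r).card) /
              (Fintype.card L : ℝ) ^ (Fintype.card V) * ∑ y : V → L, f r y) ^ c r := by
          rw [← mul_assoc, hpref]
          congr 1
          exact Finset.prod_congr rfl (fun r hr => by rw [hfac r hr])

/-- For a region family `𝓡` with potentials `θ_r`, `ε > 0`, positive
coefficients `c_r` that fractionally cover `V`, and adjustments `a_r` telescoping to zero
on every joint label,
`ε·log(∑_y exp((∑_r θ_r(y|_r))/ε)) ≤ ∑_r ε·c_r·log(∑_{z∈Y_r} exp((θ_r(z)+a_r(z))/(ε·c_r)))`. -/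
theorem fractional_softmax_decomposition_bound {V L : Type*} [Fintype V] [Nonempty V]
    [DecidableEq V] [Fintype L] [Nonempty L]
    (𝓡 : Finset (Finset V))
    (θ : (r : Finset V) → (↥r → L) → ℝ)
    (ε : ℝ) (hε : 0 < ε)
    (c : Finset V → ℝ) (hc : ∀ r ∈ 𝓡, 0 < c r)
    (hcover : ∀ i : V, 1 ≤ ∑ r ∈ 𝓡.filter (fun r => i ∈ r), c r)
    (a : (r : Finset V) → (↥r → L) → ℝ)
    (ha : ∀ y : V → L, ∑ r ∈ 𝓡, a r (fun i => y i) = 0) :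
    ε * Real.log (∑ y : V → L, Real.exp ((∑ r ∈ 𝓡, θ r (fun i => y i)) / ε)) ≤
      ∑ r ∈ 𝓡, ε * c r * Real.log (∑ z : ↥r → L, Real.exp ((θ r z + a r z) / (ε * c r))) := by
  classical
  have hN0 : (0:ℝ) < (Fintype.card L : ℝ) := by exact_mod_cast Fintype.card_pos
  set f : Finset V → (V → L) → ℝ := fun r y =>
    Real.exp ((θ r (fun i => y ↑i) + a r (fun i => y ↑i)) / (ε * c r)) with hf
  set S : Finset V → ℝ :=
    fun r => ∑ z : ↥r → L, Real.exp ((θ r z + a r z) / (ε * c r)) with hSdef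
  have hB := lemB (V := V) (L := L) (ι := Finset V) Finset.univ 𝓡 (fun r => r) f c
    (fun r _ => Finset.subset_univ r)
    (fun r _ y => (Real.exp_pos _).le)
    (fun r hr y y' hagree => by
      have he : (fun i : ↥r => y ↑i) = fun i : ↥r => y' ↑i := funext fun i => hagree i i.2
      simp only [hf, he])
    (fun r hr => (hc r hr).le)
    (fun i _ => hcover i)
  have hLHS : ∀ y : V → L, ∏ r ∈ 𝓡, f r y ^ c r
      = Real.exp ((∑ r ∈ 𝓡, θ r (fun i => y ↑i)) / ε) := by
    intro y
    have h1 : ∀ r ∈ 𝓡, f r y ^ c r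
        = Real.exp ((θ r (fun i => y ↑i) + a r (fun i => y ↑i)) / ε) := by
      intro r hr
      simp only [hf]
      rw [← Real.exp_mul]
      congr 1
      have hcne : c r ≠ 0 := ne_of_gt (hc r hr)
      have hεne : ε ≠ 0 := ne_of_gt hε
      field_simp
    rw [Finset.prod_congr rfl h1, ← Real.exp_sum]
    congr 1
    rw [← Finset.sum_div, Finset.sum_add_distrib, ha y, add_zero]
  have hRHS : ∀ r ∈ 𝓡, ((Fintype.card L : ℝ) ^ r.card /
        (Fintype.card L : ℝ) ^ (Fintype.card V) * ∑ y : V → L, f r y) = S r := by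
    intro r hr
    have hres := sum_restrict (L := L) r
      (fun z => Real.exp ((θ r z + a r z) / (ε * c r)))
    rw [show (∑ y : V → L, f r y)
        = (Fintype.card L : ℝ) ^ (Fintype.card V - r.card) * S r from hres]
    have hle : r.card ≤ Fintype.card V := by
      simpa using Finset.card_le_univ r
    rw [← mul_assoc]
    have hone : (Fintype.card L : ℝ) ^ r.card / (Fintype.card L : ℝ) ^ Fintype.card V *
        (Fintype.card L : ℝ) ^ (Fintype.card V - r.card) = 1 := by
      rw [div_mul_eq_mul_div, ← pow_add,
        show r.card + (Fintype.card V - r.card) = Fintype.card V from by omega]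
      exact div_self (pow_ne_zero _ (ne_of_gt hN0))
    rw [hone, one_mul]
  have hmain : (∑ y : V → L, Real.exp ((∑ r ∈ 𝓡, θ r (fun i => y ↑i)) / ε))
      ≤ ∏ r ∈ 𝓡, S r ^ c r := by
    calc ∑ y : V → L, Real.exp ((∑ r ∈ 𝓡, θ r (fun i => y ↑i)) / ε)
        = ∑ y : V → L, ∏ r ∈ 𝓡, f r y ^ c r :=
          Finset.sum_congr rfl (fun y _ => (hLHS y).symm)
      _ ≤ (Fintype.card L : ℝ) ^ (Fintype.card V - Finset.univ.card) *
            ∏ r ∈ 𝓡, ((Fintype.card L : ℝ) ^ r.card /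
              (Fintype.card L : ℝ) ^ (Fintype.card V) * ∑ y : V → L, f r y) ^ c r := hB
      _ = ∏ r ∈ 𝓡, S r ^ c r := by
          rw [Finset.card_univ, Nat.sub_self, pow_zero, one_mul]
          exact Finset.prod_congr rfl (fun r hr => by rw [hRHS r hr])
  have hSpos : ∀ r ∈ 𝓡, 0 < S r := by
    intro r hr
    exact Finset.sum_pos (fun z _ => Real.exp_pos _) Finset.univ_nonempty
  have hLpos : 0 < ∑ y : V → L, Real.exp ((∑ r ∈ 𝓡, θ r (fun i => y ↑i)) / ε) :=
    Finset.sum_pos (fun y _ => Real.exp_pos _) Finset.univ_nonempty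
  have hlog := Real.log_le_log hLpos hmain
  rw [Real.log_prod (fun r hr =>
    ne_of_gt (Real.rpow_pos_of_pos (hSpos r hr) _))] at hlog
  rw [Finset.sum_congr rfl (fun r hr => Real.log_rpow (hSpos r hr) (c r))] at hlog
  calc ε * Real.log (∑ y : V → L, Real.exp ((∑ r ∈ 𝓡, θ r (fun i => y ↑i)) / ε))
      ≤ ε * ∑ r ∈ 𝓡, c r * Real.log (S r) := mul_le_mul_of_nonneg_left hlog hε.le
    _ = ∑ r ∈ 𝓡, ε * c r * Real.log (S r) := by
        rw [Finset.mul_sum]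
        exact Finset.sum_congr rfl (fun r _ => by ring)
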